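/- Define F₂ : ℝ² → ℝ⁵ by F₂(x,y) = (2cos x − (1+sin y)sin x, 2sin x + (1+sin y)cos x, cos(2x+y) − (1/2)sin(2x), sin(2x+y) + (1/2)cos(2x), cos y). Then for every (x,y) ∈ ℝ², the determinant of the 5×5 matrix whose columns are, in order, ∂ₓF₂, ∂_yF₂, ∂ₓₓF₂, ∂ₓᵧF₂, ∂ᵧᵧF₂ (all evaluated at (x,y)) equals D(y) = −4 sin y + (5/2) sin(2y) + 15 cos y − 4 cos(2y) − 12; in particular, it is independent of x. -/

import Mathlib

open Real

/-- The explicit map `F₂ : ℝ² → ℝ⁵` inducing a free map of the 2-torus. -/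
noncomputable def F₂ (x y : ℝ) : Fin 5 → ℝ :=
  ![2 * cos x - (1 + sin y) * sin x,
    2 * sin x + (1 + sin y) * cos x,
    cos (2 * x + y) - (1 / 2) * sin (2 * x),
    sin (2 * x + y) + (1 / 2) * cos (2 * x),
    cos y]

/-- `∂ₓF₂`. -/
noncomputable def Gx (x y : ℝ) : Fin 5 → ℝ :=
  ![-2 * sin x - (1 + sin y) * cos x,
    2 * cos x - (1 + sin y) * sin x,
    -2 * sin (2 * x + y) - cos (2 * x),
    2 * cos (2 * x + y) - sin (2 * x),
    0]

/-- `∂ᵧF₂`. -/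
noncomputable def Gy (x y : ℝ) : Fin 5 → ℝ :=
  ![-(cos y * sin x),
    cos y * cos x,
    -sin (2 * x + y),
    cos (2 * x + y),
    -sin y]

/-- `∂ₓₓF₂`. -/
noncomputable def Gxx (x y : ℝ) : Fin 5 → ℝ :=
  ![-2 * cos x + (1 + sin y) * sin x,
    -2 * sin x - (1 + sin y) * cos x,
    -4 * cos (2 * x + y) + 2 * sin (2 * x),
    -4 * sin (2 * x + y) - 2 * cos (2 * x),
    0]

/-- `∂ₓᵧF₂`. -/
noncomputable def Gxy (x y : ℝ) : Fin 5 → ℝ :=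
  ![-(cos y * cos x),
    -(cos y * sin x),
    -2 * cos (2 * x + y),
    -2 * sin (2 * x + y),
    0]

/-- `∂ᵧᵧF₂`. -/
noncomputable def Gyy (x y : ℝ) : Fin 5 → ℝ :=
  ![sin y * sin x,
    -(sin y * cos x),
    -cos (2 * x + y),
    -sin (2 * x + y),
    -cos y]

lemma hasDerivAt_lin (a b x : ℝ) : HasDerivAt (fun t : ℝ => a * t + b) a x := by
  simpa using ((hasDerivAt_id x).const_mul a).add_const b

lemma hasDerivAt_two_mul (x : ℝ) : HasDerivAt (fun t : ℝ => 2 * t) 2 x := by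
  simpa using (hasDerivAt_id x).const_mul 2

lemma hFx (x y : ℝ) : HasDerivAt (fun x' => F₂ x' y) (Gx x y) x := by
  rw [hasDerivAt_pi]
  intro i
  fin_cases i <;> simp [F₂, Gx]
  · convert ((hasDerivAt_cos x).const_mul 2).sub ((hasDerivAt_sin x).const_mul (1 + sin y))
      using 1 <;> (try funext t) <;> (try simp only [id_eq, Pi.add_apply, Pi.sub_apply, Pi.neg_apply]) <;> ring_nf
  · convert ((hasDerivAt_sin x).const_mul 2).add ((hasDerivAt_cos x).const_mul (1 + sin y))
      using 1 <;> (try funext t) <;> (try simp only [id_eq, Pi.add_apply, Pi.sub_apply, Pi.neg_apply]) <;> ring_nf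
  · convert ((hasDerivAt_lin 2 y x).cos).sub (((hasDerivAt_two_mul x).sin).const_mul (1 / 2))
      using 1 <;> (try funext t) <;> (try simp only [id_eq, Pi.add_apply, Pi.sub_apply, Pi.neg_apply]) <;> ring_nf
  · convert ((hasDerivAt_lin 2 y x).sin).add (((hasDerivAt_two_mul x).cos).const_mul (1 / 2))
      using 1 <;> (try funext t) <;> (try simp only [id_eq, Pi.add_apply, Pi.sub_apply, Pi.neg_apply]) <;> ring_nf
  · exact hasDerivAt_const x _

lemma hFy (x y : ℝ) : HasDerivAt (fun y' => F₂ x y') (Gy x y) y := by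
  rw [hasDerivAt_pi]
  intro i
  fin_cases i <;> simp [F₂, Gy]
  · convert (hasDerivAt_const y (2 * cos x)).sub
      (((hasDerivAt_sin y).add_const 1).mul_const (sin x)) using 1 <;> (try funext t) <;> (try simp only [id_eq, Pi.add_apply, Pi.sub_apply, Pi.neg_apply]) <;> ring_nf
  · convert
      (((hasDerivAt_sin y).add_const 1).mul_const (cos x)) using 1 <;> (try funext t) <;> (try simp only [id_eq, Pi.add_apply, Pi.sub_apply, Pi.neg_apply]) <;> (try rfl) <;> ring_nf
  · convert (((hasDerivAt_id y).const_add (2 * x)).cos)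
      using 1 <;> (try funext t) <;> (try simp only [id_eq, Pi.add_apply, Pi.sub_apply, Pi.neg_apply]) <;> (try rfl) <;> ring_nf
  · convert (((hasDerivAt_id y).const_add (2 * x)).sin)
      using 1 <;> (try funext t) <;> (try simp only [id_eq, Pi.add_apply, Pi.sub_apply, Pi.neg_apply]) <;> (try rfl) <;> ring_nf
  · simpa using hasDerivAt_cos y

lemma hFxx (x y : ℝ) : HasDerivAt (fun x' => Gx x' y) (Gxx x y) x := by
  rw [hasDerivAt_pi]
  intro i
  fin_cases i <;> simp [Gx, Gxx]
  · convert (((hasDerivAt_sin x).const_mul (-2)).sub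
      ((hasDerivAt_cos x).const_mul (1 + sin y))) using 1 <;> (try funext t) <;> (try simp only [id_eq, Pi.add_apply, Pi.sub_apply, Pi.neg_apply]) <;> ring_nf
  · convert ((hasDerivAt_cos x).const_mul 2).sub ((hasDerivAt_sin x).const_mul (1 + sin y))
      using 1 <;> (try funext t) <;> (try simp only [id_eq, Pi.add_apply, Pi.sub_apply, Pi.neg_apply]) <;> ring_nf
  · convert (((hasDerivAt_lin 2 y x).sin).const_mul (-2)).sub ((hasDerivAt_two_mul x).cos)
      using 1 <;> (try funext t) <;> (try simp only [id_eq, Pi.add_apply, Pi.sub_apply, Pi.neg_apply]) <;> ring_nf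
  · convert (((hasDerivAt_lin 2 y x).cos).const_mul 2).sub ((hasDerivAt_two_mul x).sin)
      using 1 <;> (try funext t) <;> (try simp only [id_eq, Pi.add_apply, Pi.sub_apply, Pi.neg_apply]) <;> ring_nf
  · exact hasDerivAt_const x _

lemma hFxy (x y : ℝ) : HasDerivAt (fun y' => Gx x y') (Gxy x y) y := by
  rw [hasDerivAt_pi]
  intro i
  fin_cases i <;> simp [Gx, Gxy]
  · convert (hasDerivAt_const y (-2 * sin x)).sub
      (((hasDerivAt_sin y).add_const 1).mul_const (cos x)) using 1 <;> (try funext t) <;> (try simp only [id_eq, Pi.add_apply, Pi.sub_apply, Pi.neg_apply]) <;> ring_nf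
  · convert (hasDerivAt_const y (2 * cos x)).sub
      (((hasDerivAt_sin y).add_const 1).mul_const (sin x)) using 1 <;> (try funext t) <;> (try simp only [id_eq, Pi.add_apply, Pi.sub_apply, Pi.neg_apply]) <;> ring_nf
  · convert ((((hasDerivAt_id y).const_add (2 * x)).sin).const_mul (-2))
      using 1 <;> (try funext t) <;> (try simp only [id_eq, Pi.add_apply, Pi.sub_apply, Pi.neg_apply]) <;> (try rfl) <;> ring_nf
  · convert ((((hasDerivAt_id y).const_add (2 * x)).cos).const_mul 2)
      using 1 <;> (try funext t) <;> (try simp only [id_eq, Pi.add_apply, Pi.sub_apply, Pi.neg_apply]) <;> (try rfl) <;> ring_nf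
  · exact hasDerivAt_const y _

lemma hFyy (x y : ℝ) : HasDerivAt (fun y' => Gy x y') (Gyy x y) y := by
  rw [hasDerivAt_pi]
  intro i
  fin_cases i <;> simp [Gy, Gyy]
  · convert ((hasDerivAt_cos y).mul_const (sin x)).neg using 1 <;> (try funext t) <;> (try simp only [id_eq, Pi.add_apply, Pi.sub_apply, Pi.neg_apply]) <;> ring_nf
  · convert (hasDerivAt_cos y).mul_const (cos x) using 1 <;> (try funext t) <;> (try simp only [id_eq, Pi.add_apply, Pi.sub_apply, Pi.neg_apply]) <;> (try rfl) <;> ring_nf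
  · convert (((hasDerivAt_id y).const_add (2 * x)).sin).neg using 1 <;> (try funext t) <;> (try simp only [id_eq, Pi.add_apply, Pi.sub_apply, Pi.neg_apply]) <;> ring_nf
  · convert ((hasDerivAt_id y).const_add (2 * x)).cos using 1 <;> (try funext t) <;> (try simp only [id_eq, Pi.add_apply, Pi.sub_apply, Pi.neg_apply]) <;> (try rfl) <;> ring_nf
  · convert (hasDerivAt_sin y).neg using 1 <;> (try funext t) <;> (try simp only [id_eq, Pi.add_apply, Pi.sub_apply, Pi.neg_apply]) <;> ring_nf

set_option maxHeartbeats 4000000 in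
lemma det_fin_five' (a00 a01 a02 a03 a04 a10 a11 a12 a13 a14 a20 a21 a22 a23 a24 a30 a31 a32 a33 a34 a40 a41 a42 a43 a44 : ℝ) :
    (Matrix.det !![a00, a01, a02, a03, a04;
      a10, a11, a12, a13, a14;
      a20, a21, a22, a23, a24;
      a30, a31, a32, a33, a34;
      a40, a41, a42, a43, a44]) = a00 * a11 * a22 * a33 * a44 - a00 * a11 * a22 * a34 * a43 - a00 * a11 * a23 * a32 * a44 + a00 * a11 * a23 * a34 * a42 + a00 * a11 * a24 * a32 * a43 - a00 * a11 * a24 * a33 * a42 - a00 * a12 * a21 * a33 * a44 + a00 * a12 * a21 * a34 * a43 + a00 * a12 * a23 * a31 * a44 - a00 * a12 * a23 * a34 * a41 - a00 * a12 * a24 * a31 * a43 + a00 * a12 * a24 * a33 * a41 + a00 * a13 * a21 * a32 * a44 - a00 * a13 * a21 * a34 * a42 - a00 * a13 * a22 * a31 * a44 + a00 * a13 * a22 * a34 * a41 + a00 * a13 * a24 * a31 * a42 - a00 * a13 * a24 * a32 * a41 - a00 * a14 * a21 * a32 * a43 + a00 * a14 * a21 * a33 * a42 + a00 * a14 * a22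 * a31 * a43 - a00 * a14 * a22 * a33 * a41 - a00 * a14 * a23 * a31 * a42 + a00 * a14 * a23 * a32 * a41 - a01 * a10 * a22 * a33 * a44 + a01 * a10 * a22 * a34 * a43 + a01 * a10 * a23 * a32 * a44 - a01 * a10 * a23 * a34 * a42 - a01 * a10 * a24 * a32 * a43 + a01 * a10 * a24 * a33 * a42 + a01 * a12 * a20 * a33 * a44 - a01 * a12 * a20 * a34 * a43 - a01 * a12 * a23 * a30 * a44 + a01 * a12 * a23 * a34 * a40 + a01 * a12 * a24 * a30 * a43 - a01 * a12 * a24 * a33 * a40 - a01 * a13 * a20 * a32 * a44 + a01 * a13 * a20 * a34 * a42 + a01 * a13 * a22 * a30 * a44 - a01 * a13 * a22 * a34 * a40 - a01 * a13 * a24 * a30 * a42 + a01 * a13 * a24 * a32 * a40 + a01 * a14 * a20 * a32 * a43 - a01 * a14 * a20 * a33 * a42 - a01 * a14 * a22 * a30 * a43 + a01 * a14 * a22 * a33 * a40 + a01 * a14 * a23 * a30 * a42 - a01 * a14 * a23 * a32 * a40 + a02 * a10 * a21 * a33 * a44 - a02 * a10 * a21 * a34 * a43 - a02 * a10 * a23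 * a31 * a44 + a02 * a10 * a23 * a34 * a41 + a02 * a10 * a24 * a31 * a43 - a02 * a10 * a24 * a33 * a41 - a02 * a11 * a20 * a33 * a44 + a02 * a11 * a20 * a34 * a43 + a02 * a11 * a23 * a30 * a44 - a02 * a11 * a23 * a34 * a40 - a02 * a11 * a24 * a30 * a43 + a02 * a11 * a24 * a33 * a40 + a02 * a13 * a20 * a31 * a44 - a02 * a13 * a20 * a34 * a41 - a02 * a13 * a21 * a30 * a44 + a02 * a13 * a21 * a34 * a40 + a02 * a13 * a24 * a30 * a41 - a02 * a13 * a24 * a31 * a40 - a02 * a14 * a20 * a31 * a43 + a02 * a14 * a20 * a33 * a41 + a02 * a14 * a21 * a30 * a43 - a02 * a14 * a21 * a33 * a40 - a02 * a14 * a23 * a30 * a41 + a02 * a14 * a23 * a31 * a40 - a03 * a10 * a21 * a32 * a44 + a03 * a10 * a21 * a34 * a42 + a03 * a10 * a22 * a31 * a44 - a03 * a10 * a22 * a34 * a41 - a03 * a10 * a24 * a31 * a42 + a03 * a10 * a24 * a32 * a41 + a03 * a11 * a20 * a32 * a44 - a03 * a11 * a20 * a34 * a42 - a03 * a11 * a22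 * a30 * a44 + a03 * a11 * a22 * a34 * a40 + a03 * a11 * a24 * a30 * a42 - a03 * a11 * a24 * a32 * a40 - a03 * a12 * a20 * a31 * a44 + a03 * a12 * a20 * a34 * a41 + a03 * a12 * a21 * a30 * a44 - a03 * a12 * a21 * a34 * a40 - a03 * a12 * a24 * a30 * a41 + a03 * a12 * a24 * a31 * a40 + a03 * a14 * a20 * a31 * a42 - a03 * a14 * a20 * a32 * a41 - a03 * a14 * a21 * a30 * a42 + a03 * a14 * a21 * a32 * a40 + a03 * a14 * a22 * a30 * a41 - a03 * a14 * a22 * a31 * a40 + a04 * a10 * a21 * a32 * a43 - a04 * a10 * a21 * a33 * a42 - a04 * a10 * a22 * a31 * a43 + a04 * a10 * a22 * a33 * a41 + a04 * a10 * a23 * a31 * a42 - a04 * a10 * a23 * a32 * a41 - a04 * a11 * a20 * a32 * a43 + a04 * a11 * a20 * a33 * a42 + a04 * a11 * a22 * a30 * a43 - a04 * a11 * a22 * a33 * a40 - a04 * a11 * a23 * a30 * a42 + a04 * a11 * a23 * a32 * a40 + a04 * a12 * a20 * a31 * a43 - a04 * a12 * a20 * a33 * a41 - a04 * a12 * a21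 * a30 * a43 + a04 * a12 * a21 * a33 * a40 + a04 * a12 * a23 * a30 * a41 - a04 * a12 * a23 * a31 * a40 - a04 * a13 * a20 * a31 * a42 + a04 * a13 * a20 * a32 * a41 + a04 * a13 * a21 * a30 * a42 - a04 * a13 * a21 * a32 * a40 - a04 * a13 * a22 * a30 * a41 + a04 * a13 * a22 * a31 * a40 := by
  simp [Matrix.det_succ_row_zero, Fin.sum_univ_succ, Matrix.det_fin_three, Fin.succAbove,
    -Fin.val_fin_lt]
  ring

set_option maxHeartbeats 4000000 in
lemma detval (x y : ℝ) :
    Matrix.det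
      !![-2 * sin x - (1 + sin y) * cos x, -(cos y * sin x), -2 * cos x + (1 + sin y) * sin x,
           -(cos y * cos x), sin y * sin x;
         2 * cos x - (1 + sin y) * sin x, cos y * cos x, -2 * sin x - (1 + sin y) * cos x,
           -(cos y * sin x), -(sin y * cos x);
         -2 * sin (2 * x + y) - cos (2 * x), -sin (2 * x + y), -4 * cos (2 * x + y) + 2 * sin (2 * x),
           -2 * cos (2 * x + y), -cos (2 * x + y);
         2 * cos (2 * x + y) - sin (2 * x), cos (2 * x + y), -4 * sin (2 * x + y) - 2 * cos (2 * x),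
           -2 * sin (2 * x + y), -sin (2 * x + y);
         0, -sin y, 0, 0, -cos y]
    = -4 * sin y + 5 / 2 * sin (2 * y) + 15 * cos y - 4 * cos (2 * y) - 12 := by
  rw [det_fin_five']
  simp only [sin_add, cos_add, sin_two_mul, cos_two_mul']
  linear_combination
    ((1 + (sin x ^ 2 + cos x ^ 2) + (sin x ^ 2 + cos x ^ 2) ^ 2) *
      (7 * cos y ^ 3 - 16 * cos y ^ 4 + 8 * cos y ^ 5 - 4 * sin y * cos y ^ 2 +
        5 * sin y * cos y ^ 3 + 7 * sin y ^ 2 * cos y - 24 * sin y ^ 2 * cos y ^ 2 +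
        16 * sin y ^ 2 * cos y ^ 3 - 4 * sin y ^ 3 + 5 * sin y ^ 3 * cos y - 8 * sin y ^ 4 +
        8 * sin y ^ 4 * cos y)) * sin_sq_add_cos_sq x +
    (-12 + 15 * cos y - 16 * cos y ^ 2 + 8 * cos y ^ 3 - 4 * sin y + 5 * sin y * cos y -
      8 * sin y ^ 2 + 8 * sin y ^ 2 * cos y) * sin_sq_add_cos_sq y

set_option maxHeartbeats 1000000 in
lemma hMeq (x y : ℝ) : (Matrix.of fun (i j : Fin 5) =>
      ![Gx x y, Gy x y, Gxx x y, Gxy x y, Gyy x y] j i) =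
      !![-2 * sin x - (1 + sin y) * cos x, -(cos y * sin x), -2 * cos x + (1 + sin y) * sin x,
           -(cos y * cos x), sin y * sin x;
         2 * cos x - (1 + sin y) * sin x, cos y * cos x, -2 * sin x - (1 + sin y) * cos x,
           -(cos y * sin x), -(sin y * cos x);
         -2 * sin (2 * x + y) - cos (2 * x), -sin (2 * x + y), -4 * cos (2 * x + y) + 2 * sin (2 * x),
           -2 * cos (2 * x + y), -cos (2 * x + y);
         2 * cos (2 * x + y) - sin (2 * x), cos (2 * x + y), -4 * sin (2 * x + y) - 2 * cos (2 * x),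
           -2 * sin (2 * x + y), -sin (2 * x + y);
         0, -sin y, 0, 0, -cos y] := by
  ext i j
  fin_cases i <;> fin_cases j <;> simp [Gx, Gy, Gxx, Gxy, Gyy]

/-- the determinant of the 5×5 matrix whose columns are
`∂ₓF₂, ∂ᵧF₂, ∂ₓₓF₂, ∂ₓᵧF₂, ∂ᵧᵧF₂` at `(x,y)` equals
`D(y) = −4 sin y + (5/2) sin 2y + 15 cos y − 4 cos 2y − 12`;
in particular it is independent of `x`. -/
theorem osculating_det_F₂ (x y : ℝ) :
    (Matrix.of fun (i j : Fin 5) =>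
      ![deriv (fun x' => F₂ x' y) x,
        deriv (fun y' => F₂ x y') y,
        deriv (fun x' => deriv (fun x'' => F₂ x'' y) x') x,
        deriv (fun y' => deriv (fun x' => F₂ x' y') x) y,
        deriv (fun y' => deriv (fun y'' => F₂ x y'') y') y] j i).det
    = -4 * sin y + 5 / 2 * sin (2 * y) + 15 * cos y - 4 * cos (2 * y) - 12 := by
  have e1 : deriv (fun x' => F₂ x' y) x = Gx x y := (hFx x y).deriv
  have e2 : deriv (fun y' => F₂ x y') y = Gy x y := (hFy x y).deriv
  have e3 : deriv (fun x' => deriv (fun x'' => F₂ x'' y) x') x = Gxx x y := by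
    have h : (fun x' => deriv (fun x'' => F₂ x'' y) x') = fun x' => Gx x' y :=
      funext fun x' => (hFx x' y).deriv
    rw [h]; exact (hFxx x y).deriv
  have e4 : deriv (fun y' => deriv (fun x' => F₂ x' y') x) y = Gxy x y := by
    have h : (fun y' => deriv (fun x' => F₂ x' y') x) = fun y' => Gx x y' :=
      funext fun y' => (hFx x y').deriv
    rw [h]; exact (hFxy x y).deriv
  have e5 : deriv (fun y' => deriv (fun y'' => F₂ x y'') y') y = Gyy x y := by
    have h : (fun y' => deriv (fun y'' => F₂ x y'') y') = fun y' => Gy x y' :=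
      funext fun y' => (hFy x y').deriv
    rw [h]; exact (hFyy x y).deriv
  rw [e1, e2, e3, e4, e5, hMeq]
  exact detval x y
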